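/- Let a > 0. Then the at-the-money zero-correlation rate function has the closed form J_X(0; a, 0) = inf_{u>0, v>0} { (1/2)·I(u,v) + a·u/4 } = 2λ·(2·tan λ − λ), where λ ∈ (0, π/2) is the unique solution of λ²/cos²λ = a/8. -/

import Mathlib

open MeasureTheory ProbabilityTheory Filter Real
open Set intervalIntegral

/-- The variational rate function `I(u,v)`: infimum of `4∫₀¹ f'(z)² dz` over absolutely
continuous `f : [0,1] → ℝ` (written as `f(z) = ∫₀ᶻ g`) with square-integrable derivative `g`,
`f(0) = 0`, `∫₀¹ e^{2 f(z)} dz = u` and `e^{f(1)} = v`. -/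
noncomputable def ratefun (u v : ℝ) : ℝ :=
  sInf {r : ℝ | ∃ g : ℝ → ℝ,
    IntervalIntegrable g volume 0 1 ∧
    IntervalIntegrable (fun z => (g z) ^ 2) volume 0 1 ∧
    (∫ z in (0:ℝ)..(1:ℝ), Real.exp (2 * ∫ t in (0:ℝ)..z, g t)) = u ∧
    Real.exp (∫ t in (0:ℝ)..(1:ℝ), g t) = v ∧
    r = 4 * ∫ z in (0:ℝ)..(1:ℝ), (g z) ^ 2}



noncomputable def JXphi (lam z : ℝ) : ℝ := -(lam * Real.tan (lam * (1 - z)))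
noncomputable def JXphid (lam z : ℝ) : ℝ := lam ^ 2 / Real.cos (lam * (1 - z)) ^ 2
noncomputable def JXfstar (lam z : ℝ) : ℝ :=
  Real.log (Real.cos lam) - Real.log (Real.cos (lam * (1 - z)))

section basic
variable {lam : ℝ} (hl1 : 0 < lam) (hl2 : lam < Real.pi / 2)

lemma JXcos_pos (hl1 : 0 < lam) (hl2 : lam < Real.pi / 2) {z : ℝ} (hz : z ∈ Icc (0:ℝ) 1) :
    0 < Real.cos (lam * (1 - z)) := by
  apply Real.cos_pos_of_mem_Ioo
  constructor
  · nlinarith [Real.pi_pos, hz.1, hz.2]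
  · nlinarith [Real.pi_pos, hz.1, hz.2]

lemma JXfstar_hasDeriv (hl1 : 0 < lam) (hl2 : lam < Real.pi / 2) {z : ℝ} (hz : z ∈ Icc (0:ℝ) 1) :
    HasDerivAt (JXfstar lam) (JXphi lam z) z := by
  have hc := JXcos_pos hl1 hl2 hz
  have h1 : HasDerivAt (fun z : ℝ => lam * (1 - z)) (-lam) z := by
    simpa using ((hasDerivAt_id z).const_sub 1).const_mul lam
  have h2 : HasDerivAt (fun z : ℝ => Real.cos (lam * (1 - z)))
      (-Real.sin (lam * (1 - z)) * (-lam)) z := (Real.hasDerivAt_cos _).comp z h1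
  have h3 : HasDerivAt (fun z : ℝ => Real.log (Real.cos (lam * (1 - z))))
      ((-Real.sin (lam * (1 - z)) * (-lam)) / Real.cos (lam * (1 - z))) z :=
    h2.log hc.ne'
  have h4 := h3.const_sub (Real.log (Real.cos lam))
  refine HasDerivAt.congr_deriv h4 (Eq.symm ?_)
  unfold JXphi
  rw [Real.tan_eq_sin_div_cos]
  field_simp

lemma JXphi_hasDeriv (hl1 : 0 < lam) (hl2 : lam < Real.pi / 2) {z : ℝ} (hz : z ∈ Icc (0:ℝ) 1) :
    HasDerivAt (JXphi lam) (JXphid lam z) z := by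
  have hc := JXcos_pos hl1 hl2 hz
  have h1 : HasDerivAt (fun z : ℝ => lam * (1 - z)) (-lam) z := by
    simpa using ((hasDerivAt_id z).const_sub 1).const_mul lam
  have h2 : HasDerivAt (fun z : ℝ => Real.tan (lam * (1 - z)))
      ((1 / Real.cos (lam * (1 - z)) ^ 2) * (-lam)) z :=
    by have := (Real.hasDerivAt_tan hc.ne').comp z h1; exact this
  have h3 := (h2.const_mul lam).neg
  refine HasDerivAt.congr_deriv h3 (Eq.symm ?_)
  unfold JXphid
  field_simp

lemma JXphi_one : JXphi lam 1 = 0 := by simp [JXphi]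

lemma JXfstar_zero : JXfstar lam 0 = 0 := by simp [JXfstar]

lemma JXexp_fstar (hl1 : 0 < lam) (hl2 : lam < Real.pi / 2) {z : ℝ} (hz : z ∈ Icc (0:ℝ) 1) :
    Real.exp (2 * JXfstar lam z) = Real.cos lam ^ 2 / Real.cos (lam * (1 - z)) ^ 2 := by
  have hc := JXcos_pos hl1 hl2 hz
  have hc0 : 0 < Real.cos lam := by
    simpa using JXcos_pos hl1 hl2 (show (0:ℝ) ∈ Icc (0:ℝ) 1 by simp)
  unfold JXfstar
  rw [mul_sub, Real.exp_sub]
  rw [show (2:ℝ) * Real.log (Real.cos lam) = Real.log (Real.cos lam ^ 2) by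
    rw [Real.log_pow]; push_cast; ring]
  rw [show (2:ℝ) * Real.log (Real.cos (lam * (1 - z))) = Real.log (Real.cos (lam * (1 - z)) ^ 2) by
    rw [Real.log_pow]; push_cast; ring]
  rw [Real.exp_log (by positivity), Real.exp_log (by positivity)]

end basic

section s2
variable {lam : ℝ}

lemma JXphi_contOn (hl1 : 0 < lam) (hl2 : lam < Real.pi / 2) :
    ContinuousOn (JXphi lam) (Icc (0:ℝ) 1) := fun z hz =>
  ((JXphi_hasDeriv hl1 hl2 hz).continuousAt).continuousWithinAt

lemma JXphid_contOn (hl1 : 0 < lam) (hl2 : lam < Real.pi / 2) :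
    ContinuousOn (JXphid lam) (Icc (0:ℝ) 1) := by
  apply ContinuousOn.div continuousOn_const
  · fun_prop
  · intro z hz
    exact pow_ne_zero _ (JXcos_pos hl1 hl2 hz).ne'

/-- Antiderivative computation for `phi^2`. -/
lemma JXint_phisq (hl1 : 0 < lam) (hl2 : lam < Real.pi / 2) :
    ∫ z in (0:ℝ)..1, (JXphi lam z) ^ 2 = lam * Real.tan lam - lam ^ 2 := by
  have key : ∀ z ∈ Icc (0:ℝ) 1,
      HasDerivAt (fun z : ℝ => lam * Real.tan (lam * (1 - z)) + lam ^ 2 * z)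
        (-(JXphi lam z) ^ 2) z := by
    intro z hz
    have hc := JXcos_pos hl1 hl2 hz
    have h1 : HasDerivAt (fun z : ℝ => lam * (1 - z)) (-lam) z := by
      simpa using ((hasDerivAt_id z).const_sub 1).const_mul lam
    have h2 : HasDerivAt (fun z : ℝ => Real.tan (lam * (1 - z)))
        ((1 / Real.cos (lam * (1 - z)) ^ 2) * (-lam)) z :=
      by have := (Real.hasDerivAt_tan hc.ne').comp z h1; exact this
    have h3 := (h2.const_mul lam).add ((hasDerivAt_id z).const_mul (lam ^ 2))
    refine HasDerivAt.congr_deriv h3 (Eq.symm ?_)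
    have hsc := Real.sin_sq_add_cos_sq (lam * (1 - z))
    unfold JXphi
    rw [Real.tan_eq_sin_div_cos]
    field_simp
    linear_combination (-1 : ℝ) * hsc
  have h2 := intervalIntegral.integral_eq_sub_of_hasDerivAt (a := (0:ℝ)) (b := 1)
      (f := fun z : ℝ => lam * Real.tan (lam * (1 - z)) + lam ^ 2 * z)
      (f' := fun z => -(JXphi lam z) ^ 2)
      (fun z hz => key z (by simpa [Set.uIcc_of_le] using hz))
      (by
        apply ContinuousOn.intervalIntegrable
        have := ((JXphi_contOn hl1 hl2).pow 2).neg
        rw [Set.uIcc_of_le (by norm_num : (0:ℝ) ≤ 1)]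
        exact this)
  rw [intervalIntegral.integral_neg] at h2
  have : (∫ z in (0:ℝ)..1, (JXphi lam z) ^ 2)
      = -(lam * Real.tan (lam * (1 - 1)) + lam ^ 2 * 1 - (lam * Real.tan (lam * (1 - 0)) + lam ^ 2 * 0)) := by
    rw [← h2]; ring
  rw [this]
  norm_num

lemma JXint_phid (hl1 : 0 < lam) (hl2 : lam < Real.pi / 2) :
    ∫ z in (0:ℝ)..1, JXphid lam z = lam * Real.tan lam := by
  have h2 : ∫ z in (0:ℝ)..1, JXphid lam z = JXphi lam 1 - JXphi lam 0 := by
    apply intervalIntegral.integral_eq_sub_of_hasDerivAt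
    · intro z hz
      exact JXphi_hasDeriv hl1 hl2 (by simpa [Set.uIcc_of_le] using hz)
    · apply ContinuousOn.intervalIntegrable
      rw [Set.uIcc_of_le (by norm_num : (0:ℝ) ≤ 1)]
      exact JXphid_contOn hl1 hl2
  rw [h2]
  simp [JXphi]

end s2

/-- Integration by parts against a primitive, via Fubini. -/
lemma JXparts (ψ ψd k : ℝ → ℝ)
    (hψ : ∀ z ∈ Icc (0:ℝ) 1, HasDerivAt ψ (ψd z) z)
    (hψd : ContinuousOn ψd (Icc (0:ℝ) 1))
    (hk : IntervalIntegrable k volume 0 1) :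
    ∫ z in (0:ℝ)..1, ψd z * (∫ t in (0:ℝ)..z, k t)
      = ∫ t in (0:ℝ)..1, (ψ 1 - ψ t) * k t := by
  set μ : Measure ℝ := volume.restrict (Ioc (0:ℝ) 1) with hμ
  set Φ : ℝ × ℝ → ℝ := {p : ℝ × ℝ | p.2 ≤ p.1}.indicator (fun p => ψd p.1 * k p.2) with hΦ
  have hkInt : IntegrableOn k (Ioc (0:ℝ) 1) volume := by
    simpa using hk.1
  have hψdInt : IntegrableOn ψd (Ioc (0:ℝ) 1) volume :=
    (hψd.integrableOn_Icc).mono_set Ioc_subset_Icc_self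
  have hmeas : MeasurableSet {p : ℝ × ℝ | p.2 ≤ p.1} :=
    (isClosed_le continuous_snd continuous_fst).measurableSet
  have hGint : Integrable Φ (μ.prod μ) :=
    (Integrable.mul_prod hψdInt hkInt).indicator hmeas
  have swap : ∫ z, (∫ t, Φ (z, t) ∂μ) ∂μ = ∫ t, (∫ z, Φ (z, t) ∂μ) ∂μ := by
    apply MeasureTheory.integral_integral_swap
    exact hGint
  have inner1 : ∀ z ∈ Ioc (0:ℝ) 1,
      (∫ t, Φ (z, t) ∂μ) = ψd z * ∫ t in (0:ℝ)..z, k t := by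
    intro z hz
    have h1 : (fun t => Φ (z, t)) = Set.indicator (Iic z) (fun t => ψd z * k t) := by
      ext t
      by_cases h : t ≤ z <;> simp [hΦ, Set.indicator, h]
    rw [h1, MeasureTheory.integral_indicator measurableSet_Iic, hμ,
      Measure.restrict_restrict measurableSet_Iic]
    have h2 : Iic z ∩ Ioc (0:ℝ) 1 = Ioc 0 z := by
      ext w
      simp only [mem_inter_iff, mem_Iic, mem_Ioc]
      constructor
      · rintro ⟨h1', h2', _⟩; exact ⟨h2', h1'⟩
      · rintro ⟨h1', h2'⟩; exact ⟨h2', h1', h2'.trans hz.2⟩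
    rw [h2, MeasureTheory.integral_const_mul, intervalIntegral.integral_of_le hz.1.le]
  have inner2 : ∀ t ∈ Ioc (0:ℝ) 1,
      (∫ z, Φ (z, t) ∂μ) = (ψ 1 - ψ t) * k t := by
    intro t ht
    have h1 : (fun z => Φ (z, t)) = Set.indicator (Ici t) (fun z => ψd z * k t) := by
      ext z
      by_cases h : t ≤ z <;> simp [hΦ, Set.indicator, h]
    rw [h1, MeasureTheory.integral_indicator measurableSet_Ici, hμ,
      Measure.restrict_restrict measurableSet_Ici]
    have h2 : Ici t ∩ Ioc (0:ℝ) 1 = Icc t 1 := by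
      ext w
      simp only [mem_inter_iff, mem_Ici, mem_Ioc, mem_Icc]
      constructor
      · rintro ⟨h1', _, h3'⟩; exact ⟨h1', h3'⟩
      · rintro ⟨h1', h2'⟩; exact ⟨h1', ht.1.trans_le h1', h2'⟩
    rw [h2, MeasureTheory.integral_mul_const, integral_Icc_eq_integral_Ioc,
      ← intervalIntegral.integral_of_le ht.2]
    have hsub : Icc t 1 ⊆ Icc (0:ℝ) 1 := Icc_subset_Icc ht.1.le le_rfl
    have hftc : ∫ z in t..(1:ℝ), ψd z = ψ 1 - ψ t := by
      apply intervalIntegral.integral_eq_sub_of_hasDerivAt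
      · intro x hx
        rw [Set.uIcc_of_le ht.2] at hx
        exact hψ x (hsub hx)
      · apply ContinuousOn.intervalIntegrable
        rw [Set.uIcc_of_le ht.2]
        exact hψd.mono hsub
    rw [hftc]
  calc ∫ z in (0:ℝ)..1, ψd z * (∫ t in (0:ℝ)..z, k t)
      = ∫ z, ψd z * (∫ t in (0:ℝ)..z, k t) ∂μ := intervalIntegral.integral_of_le zero_le_one
    _ = ∫ z, (∫ t, Φ (z, t) ∂μ) ∂μ := by
        refine (MeasureTheory.setIntegral_congr_fun measurableSet_Ioc fun z hz => ?_).symm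
        exact inner1 z hz
    _ = ∫ t, (∫ z, Φ (z, t) ∂μ) ∂μ := swap
    _ = ∫ t, (ψ 1 - ψ t) * k t ∂μ :=
        MeasureTheory.setIntegral_congr_fun measurableSet_Ioc fun t ht => inner2 t ht
    _ = ∫ t in (0:ℝ)..1, (ψ 1 - ψ t) * k t := (intervalIntegral.integral_of_le zero_le_one).symm


lemma JXprim_phi {lam : ℝ} (hl1 : 0 < lam) (hl2 : lam < Real.pi / 2) {z : ℝ}
    (hz : z ∈ Icc (0:ℝ) 1) : (∫ t in (0:ℝ)..z, JXphi lam t) = JXfstar lam z := by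
  have hsub : Set.uIcc (0:ℝ) z ⊆ Icc (0:ℝ) 1 := by
    rw [Set.uIcc_of_le hz.1]
    exact Icc_subset_Icc le_rfl hz.2
  have hphz : IntervalIntegrable (JXphi lam) volume 0 z :=
    ((JXphi_contOn hl1 hl2).mono hsub).intervalIntegrable
  have := intervalIntegral.integral_eq_sub_of_hasDerivAt (a := (0:ℝ)) (b := z)
    (f := JXfstar lam) (f' := JXphi lam)
    (fun x hx => JXfstar_hasDeriv hl1 hl2 (hsub hx)) hphz
  rw [this]
  simp [JXfstar]

lemma JXexp_fstar8 {a lam : ℝ} (ha : 0 < a) (hl1 : 0 < lam) (hl2 : lam < Real.pi / 2)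
    (heq : lam ^ 2 / Real.cos lam ^ 2 = a / 8) {z : ℝ} (hz : z ∈ Icc (0:ℝ) 1) :
    Real.exp (2 * JXfstar lam z) = 8 / a * JXphid lam z := by
  have hc := JXcos_pos hl1 hl2 hz
  have hcos0 : (0:ℝ) < Real.cos lam :=
    Real.cos_pos_of_mem_Ioo ⟨by linarith [Real.pi_pos], hl2⟩
  rw [JXexp_fstar hl1 hl2 hz]
  have hclam : Real.cos lam ^ 2 = 8 * lam ^ 2 / a := by
    field_simp at heq
    field_simp
    nlinarith [heq]
  rw [hclam]
  unfold JXphid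
  field_simp

/-- The fundamental lower bound: for any admissible `g`,
`2∫g² + (a/4)∫exp(2F) ≥ 4λ tan λ − 2λ²`. -/
lemma JX_lower {a lam : ℝ} (ha : 0 < a) (hl1 : 0 < lam) (hl2 : lam < Real.pi / 2)
    (heq : lam ^ 2 / Real.cos lam ^ 2 = a / 8)
    (g : ℝ → ℝ) (hg : IntervalIntegrable g volume 0 1)
    (hg2 : IntervalIntegrable (fun z => (g z) ^ 2) volume 0 1) :
    4 * lam * Real.tan lam - 2 * lam ^ 2
      ≤ 2 * (∫ z in (0:ℝ)..1, (g z) ^ 2)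
        + (a / 4) * ∫ z in (0:ℝ)..1, Real.exp (2 * ∫ t in (0:ℝ)..z, g t) := by
  have huIcc : Set.uIcc (0:ℝ) 1 = Icc (0:ℝ) 1 := Set.uIcc_of_le zero_le_one
  have hcos0 : (0:ℝ) < Real.cos lam := by
    have := Real.cos_pos_of_mem_Ioo (show lam ∈ Ioo (-(Real.pi/2)) (Real.pi/2) from
      ⟨by linarith, hl2⟩)
    exact this
  have hphiC : ContinuousOn (JXphi lam) (Icc (0:ℝ) 1) := JXphi_contOn hl1 hl2
  have hphidC : ContinuousOn (JXphid lam) (Icc (0:ℝ) 1) := JXphid_contOn hl1 hl2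
  have hphiII : IntervalIntegrable (JXphi lam) volume 0 1 := by
    apply ContinuousOn.intervalIntegrable; rwa [huIcc]
  -- k = g - phi
  set k : ℝ → ℝ := fun z => g z - JXphi lam z with hkdef
  have hkII : IntervalIntegrable k volume 0 1 := hg.sub hphiII
  -- primitives
  set F : ℝ → ℝ := fun z => ∫ t in (0:ℝ)..z, g t with hFdef
  set K : ℝ → ℝ := fun z => ∫ t in (0:ℝ)..z, k t with hKdef
  have hFK : ∀ z ∈ Icc (0:ℝ) 1, K z = F z - JXfstar lam z := by
    intro z hz
    have hsub : Set.uIcc (0:ℝ) z ⊆ Set.uIcc (0:ℝ) 1 := by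
      rw [huIcc, Set.uIcc_of_le hz.1]
      exact Icc_subset_Icc le_rfl hz.2
    have hgz : IntervalIntegrable g volume 0 z := hg.mono_set hsub
    have hphz : IntervalIntegrable (JXphi lam) volume 0 z := hphiII.mono_set hsub
    have hftc : ∫ t in (0:ℝ)..z, JXphi lam t = JXfstar lam z := by
      have := intervalIntegral.integral_eq_sub_of_hasDerivAt (a := (0:ℝ)) (b := z)
        (f := JXfstar lam) (f' := JXphi lam)
        (fun x hx => JXfstar_hasDeriv hl1 hl2 (by
          rw [Set.uIcc_of_le hz.1] at hx
          exact Icc_subset_Icc le_rfl hz.2 hx)) hphz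
      rw [this]
      simp [JXfstar]
    rw [hKdef]
    simp only [hkdef]
    rw [intervalIntegral.integral_sub hgz hphz, hftc]
  have hKC : ContinuousOn K (Icc (0:ℝ) 1) := by
    have : IntegrableOn k (Set.uIcc (0:ℝ) 1) volume := by
      rw [huIcc]
      exact (intervalIntegrable_iff_integrableOn_Icc_of_le zero_le_one).mp hkII
    have := intervalIntegral.continuousOn_primitive_interval this
    rwa [huIcc] at this
  have hFC : ContinuousOn F (Icc (0:ℝ) 1) := by
    have : IntegrableOn g (Set.uIcc (0:ℝ) 1) volume := by
      rw [huIcc]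
      exact (intervalIntegrable_iff_integrableOn_Icc_of_le zero_le_one).mp hg
    have := intervalIntegral.continuousOn_primitive_interval this
    rwa [huIcc] at this
  -- interval integrability of the various products
  have hphikII : IntervalIntegrable (fun z => JXphi lam z * k z) volume 0 1 := by
    apply hkII.continuousOn_mul; rwa [huIcc]
  have hphisqII : IntervalIntegrable (fun z => (JXphi lam z) ^ 2) volume 0 1 := by
    apply ContinuousOn.intervalIntegrable; rw [huIcc]; exact hphiC.pow 2
  have hphidII : IntervalIntegrable (JXphid lam) volume 0 1 := by
    apply ContinuousOn.intervalIntegrable; rwa [huIcc]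
  have hphidKII : IntervalIntegrable (fun z => JXphid lam z * K z) volume 0 1 := by
    apply ContinuousOn.intervalIntegrable; rw [huIcc]; exact hphidC.mul hKC
  -- Step 1 : ∫ g² ≥ ∫ φ² + 2 ∫ φ k
  have step1 : (∫ z in (0:ℝ)..1, ((JXphi lam z) ^ 2 + 2 * (JXphi lam z * k z)))
      ≤ ∫ z in (0:ℝ)..1, (g z) ^ 2 := by
    apply intervalIntegral.integral_mono_on zero_le_one
      (hphisqII.add (hphikII.const_mul 2)) hg2
    intro z _
    have : (g z - JXphi lam z) ^ 2 ≥ 0 := sq_nonneg _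
    simp only [hkdef]
    nlinarith [this]
  -- Step 2 : ∫ exp(2F) ≥ ∫ (8/a) φd (1 + 2K)
  have key2 : ∀ z ∈ Icc (0:ℝ) 1,
      8 / a * (JXphid lam z * (1 + 2 * K z)) ≤ Real.exp (2 * F z) := by
    intro z hz
    have hc := JXcos_pos hl1 hl2 hz
    have hexpf : Real.exp (2 * JXfstar lam z) = 8 / a * JXphid lam z := by
      rw [JXexp_fstar hl1 hl2 hz]
      have hclam : Real.cos lam ^ 2 = 8 * lam ^ 2 / a := by
        field_simp at heq
        field_simp
        nlinarith [heq]
      rw [hclam]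
      unfold JXphid
      field_simp
    have h1 : Real.exp (2 * F z) = Real.exp (2 * JXfstar lam z) * Real.exp (2 * K z) := by
      rw [← Real.exp_add]
      congr 1
      have := hFK z hz
      ring_nf
      nlinarith [this]
    rw [h1, hexpf]
    have h2 : (1 + 2 * K z) ≤ Real.exp (2 * K z) := by
      have := Real.add_one_le_exp (2 * K z)
      linarith
    have h3 : 0 < JXphid lam z := by
      unfold JXphid
      positivity
    have h4 : 0 < 8 / a * JXphid lam z := by positivity
    nlinarith [h4, h2]
  have hlhs2II : IntervalIntegrable (fun z => 8 / a * (JXphid lam z * (1 + 2 * K z)))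
      volume 0 1 := by
    apply ContinuousOn.intervalIntegrable
    rw [huIcc]
    exact continuousOn_const.mul (hphidC.mul (continuousOn_const.add (continuousOn_const.mul hKC)))
  have hexpFII : IntervalIntegrable (fun z => Real.exp (2 * F z)) volume 0 1 := by
    apply ContinuousOn.intervalIntegrable
    rw [huIcc]
    exact Real.continuous_exp.comp_continuousOn (continuousOn_const.mul hFC)
  have step2 : (∫ z in (0:ℝ)..1, 8 / a * (JXphid lam z * (1 + 2 * K z)))
      ≤ ∫ z in (0:ℝ)..1, Real.exp (2 * F z) := by
    apply intervalIntegral.integral_mono_on zero_le_one hlhs2II hexpFII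
    exact key2
  -- Fubini identity
  have hfub : ∫ z in (0:ℝ)..1, JXphid lam z * K z
      = -∫ z in (0:ℝ)..1, JXphi lam z * k z := by
    have := JXparts (JXphi lam) (JXphid lam) k
      (fun z hz => JXphi_hasDeriv hl1 hl2 hz) hphidC hkII
    rw [hKdef]
    rw [this]
    rw [← intervalIntegral.integral_neg]
    apply intervalIntegral.integral_congr
    intro t _
    have h1 : JXphi lam 1 = 0 := by simp [JXphi]
    rw [h1]
    ring
  -- split the integrals
  have hsplit1 : (∫ z in (0:ℝ)..1, ((JXphi lam z) ^ 2 + 2 * (JXphi lam z * k z)))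
      = (lam * Real.tan lam - lam ^ 2) + 2 * ∫ z in (0:ℝ)..1, JXphi lam z * k z := by
    rw [intervalIntegral.integral_add hphisqII (hphikII.const_mul 2),
      intervalIntegral.integral_const_mul, JXint_phisq hl1 hl2]
  have hsplit2 : (∫ z in (0:ℝ)..1, 8 / a * (JXphid lam z * (1 + 2 * K z)))
      = 8 / a * (lam * Real.tan lam + 2 * ∫ z in (0:ℝ)..1, JXphid lam z * K z) := by
    have heq2 : ∀ z, 8 / a * (JXphid lam z * (1 + 2 * K z))
        = 8 / a * (JXphid lam z + 2 * (JXphid lam z * K z)) := by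
      intro z; ring
    simp only [heq2]
    rw [intervalIntegral.integral_const_mul,
      intervalIntegral.integral_add hphidII (hphidKII.const_mul 2),
      intervalIntegral.integral_const_mul, JXint_phid hl1 hl2]
  rw [hsplit1] at step1
  rw [hsplit2] at step2
  set P := ∫ z in (0:ℝ)..1, JXphi lam z * k z with hP
  set Q := ∫ z in (0:ℝ)..1, JXphid lam z * K z with hQ
  have hQP : Q = -P := hfub
  rw [hQP] at step2
  have ha4 : (0:ℝ) < a / 4 := by positivity
  have h5 := mul_le_mul_of_nonneg_left step2 ha4.le
  have h6 : a / 4 * (8 / a * (lam * Real.tan lam + 2 * -P))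
      = 2 * lam * Real.tan lam - 4 * P := by
    field_simp
    ring
  rw [h6] at h5
  linarith [step1, h5]

/-- Every `(u,v)` with `u,v > 0` is achievable by an admissible `g`. -/
lemma JX_exists (u v : ℝ) (hu : 0 < u) (hv : 0 < v) :
    ∃ g : ℝ → ℝ,
      IntervalIntegrable g volume 0 1 ∧
      IntervalIntegrable (fun z => (g z) ^ 2) volume 0 1 ∧
      (∫ z in (0:ℝ)..(1:ℝ), Real.exp (2 * ∫ t in (0:ℝ)..z, g t)) = u ∧
      Real.exp (∫ t in (0:ℝ)..(1:ℝ), g t) = v := by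
  set c : ℝ := Real.log v with hc
  set U : ℝ → ℝ := fun t => ∫ z in (0:ℝ)..1, Real.exp (2 * (c * z + t * (z - z ^ 2))) with hU
  -- basic integrands facts
  have hmeas : ∀ t : ℝ, AEStronglyMeasurable (fun z => Real.exp (2 * (c * z + t * (z - z ^ 2))))
      (volume.restrict (Set.uIoc (0:ℝ) 1)) := by
    intro t
    apply Continuous.aestronglyMeasurable
    fun_prop
  -- continuity of U
  have hUcont : Continuous U := by
    rw [continuous_iff_continuousAt]
    intro t₀
    have := intervalIntegral.tendsto_integral_filter_of_dominated_convergence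
      (μ := volume) (a := 0) (b := 1) (l := nhds t₀)
      (F := fun t z => Real.exp (2 * (c * z + t * (z - z ^ 2))))
      (f := fun z => Real.exp (2 * (c * z + t₀ * (z - z ^ 2))))
      (bound := fun _ => Real.exp (2 * |c| + (|t₀| + 1)))
      (Eventually.of_forall hmeas)
      ?_ (by apply intervalIntegrable_const) ?_
    · exact this
    · have hball : ∀ᶠ t in nhds t₀, |t - t₀| ≤ 1 := by
        have := Metric.closedBall_mem_nhds t₀ (zero_lt_one)
        filter_upwards [this] with t ht
        simpa [Real.dist_eq] using ht
      filter_upwards [hball] with t ht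
      apply Eventually.of_forall
      intro z hz
      rw [Set.uIoc_of_le (zero_le_one)] at hz
      rw [Real.norm_eq_abs, abs_of_pos (Real.exp_pos _), Real.exp_le_exp]
      have hz1 : 0 < z := hz.1
      have hz2 : z ≤ 1 := hz.2
      have h1 : c * z ≤ |c| := by
        calc c * z ≤ |c| * z := by
              apply mul_le_mul_of_nonneg_right (le_abs_self c) hz1.le
          _ ≤ |c| * 1 := by
              apply mul_le_mul_of_nonneg_left hz2 (abs_nonneg c)
          _ = |c| := mul_one _
      have h2 : t * (z - z ^ 2) ≤ (|t₀| + 1) / 2 := by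
        have hd1 : (0:ℝ) ≤ z - z ^ 2 := by nlinarith
        have hd2 : z - z ^ 2 ≤ 1 / 4 := by nlinarith [sq_nonneg (z - 1/2)]
        have ht' : |t| ≤ |t₀| + 1 := by
          have := abs_sub_abs_le_abs_sub t t₀
          linarith
        calc t * (z - z ^ 2) ≤ |t| * (z - z ^ 2) := by
              apply mul_le_mul_of_nonneg_right (le_abs_self t) hd1
          _ ≤ (|t₀| + 1) * (1 / 4) := by
              apply mul_le_mul ht' hd2 hd1 (by positivity)
          _ ≤ (|t₀| + 1) / 2 := by nlinarith [abs_nonneg t₀]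
      linarith
    · apply Eventually.of_forall
      intro z _
      apply Continuous.tendsto
      fun_prop
  -- limit at -infty
  have hUbot : Tendsto U atBot (nhds 0) := by
    have h0 : (0:ℝ) = ∫ z in (0:ℝ)..1, (0:ℝ) := by simp
    rw [h0]
    apply intervalIntegral.tendsto_integral_filter_of_dominated_convergence
      (bound := fun _ => Real.exp (2 * |c|))
      (Eventually.of_forall hmeas) ?_ (by apply intervalIntegrable_const) ?_
    · filter_upwards [eventually_le_atBot (0:ℝ)] with t ht
      apply Eventually.of_forall
      intro z hz
      rw [Set.uIoc_of_le (zero_le_one)] at hz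
      rw [Real.norm_eq_abs, abs_of_pos (Real.exp_pos _), Real.exp_le_exp]
      have hz1 : 0 < z := hz.1
      have hz2 : z ≤ 1 := hz.2
      have h1 : c * z ≤ |c| := by
        calc c * z ≤ |c| * z := mul_le_mul_of_nonneg_right (le_abs_self c) hz1.le
          _ ≤ |c| * 1 := mul_le_mul_of_nonneg_left hz2 (abs_nonneg c)
          _ = |c| := mul_one _
      have h2 : t * (z - z ^ 2) ≤ 0 := by
        have hd1 : (0:ℝ) ≤ z - z ^ 2 := by nlinarith
        exact mul_nonpos_of_nonpos_of_nonneg ht hd1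
      linarith
    · have hne : ∀ᵐ z : ℝ, z ≠ (1:ℝ) := by
        have : (volume : Measure ℝ) {(1:ℝ)} = 0 := measure_singleton 1
        rw [MeasureTheory.ae_iff]
        simpa using this
      filter_upwards [hne] with z hzne hz
      rw [Set.uIoc_of_le (zero_le_one)] at hz
      have hz1 : 0 < z := hz.1
      have hz2 : z < 1 := lt_of_le_of_ne hz.2 hzne
      have hd : 0 < z - z ^ 2 := by nlinarith
      have key : Tendsto (fun t : ℝ => 2 * (c * z) + t * (2 * (z - z ^ 2))) atBot atBot := by
        apply Filter.tendsto_atBot_add_const_left atBot (2 * (c * z))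
        exact Filter.tendsto_id.atBot_mul_const (by linarith)
      have := Real.tendsto_exp_atBot.comp key
      convert this using 2 with t
      simp only [Function.comp]
      ring_nf
  -- small value
  obtain ⟨t₁, ht₁⟩ : ∃ t₁, U t₁ < u := (hUbot.eventually_lt_const hu).exists
  -- large value
  set t₂ : ℝ := (8 / 3) * (2 * |c| + Real.log (2 * u + 1)) with ht₂def
  have hlogpos : 0 < Real.log (2 * u + 1) := Real.log_pos (by linarith)
  have ht₂pos : 0 ≤ t₂ := by
    have := abs_nonneg c
    rw [ht₂def]; nlinarith
  have hIIexp : ∀ p q : ℝ, IntervalIntegrable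
      (fun z => Real.exp (2 * (c * z + t₂ * (z - z ^ 2)))) volume p q := by
    intro p q
    apply Continuous.intervalIntegrable
    fun_prop
  have ht₂big : u < U t₂ := by
    have hs1 : (∫ z in (0:ℝ)..(1/4), Real.exp (2 * (c * z + t₂ * (z - z ^ 2))))
        + (∫ z in (1/4:ℝ)..1, Real.exp (2 * (c * z + t₂ * (z - z ^ 2))))
        = U t₂ := intervalIntegral.integral_add_adjacent_intervals (hIIexp _ _) (hIIexp _ _)
    have hs2 : (∫ z in (1/4:ℝ)..(3/4), Real.exp (2 * (c * z + t₂ * (z - z ^ 2))))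
        + (∫ z in (3/4:ℝ)..1, Real.exp (2 * (c * z + t₂ * (z - z ^ 2))))
        = ∫ z in (1/4:ℝ)..1, Real.exp (2 * (c * z + t₂ * (z - z ^ 2))) :=
      intervalIntegral.integral_add_adjacent_intervals (hIIexp _ _) (hIIexp _ _)
    have hA : 0 ≤ ∫ z in (0:ℝ)..(1/4), Real.exp (2 * (c * z + t₂ * (z - z ^ 2))) := by
      apply intervalIntegral.integral_nonneg (by norm_num)
      intro z _; positivity
    have hC : 0 ≤ ∫ z in (3/4:ℝ)..1, Real.exp (2 * (c * z + t₂ * (z - z ^ 2))) := by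
      apply intervalIntegral.integral_nonneg (by norm_num)
      intro z _; positivity
    have hB : (∫ z in (1/4:ℝ)..(3/4), Real.exp (-(2 * |c|) + (3 / 8) * t₂))
        ≤ ∫ z in (1/4:ℝ)..(3/4), Real.exp (2 * (c * z + t₂ * (z - z ^ 2))) := by
      apply intervalIntegral.integral_mono_on (by norm_num)
        (intervalIntegrable_const (c := Real.exp (-(2 * |c|) + (3 / 8) * t₂))) (hIIexp _ _)
      intro z hz
      rw [Real.exp_le_exp]
      have hz1 : (1/4:ℝ) ≤ z := hz.1
      have hz2 : z ≤ (3/4:ℝ) := hz.2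
      have h1 : -|c| ≤ c * z := by
        have hc1 : -|c| ≤ c := neg_abs_le c
        nlinarith [abs_nonneg c]
      have h2 : (3/16:ℝ) * t₂ ≤ t₂ * (z - z ^ 2) := by
        have : (3/16:ℝ) ≤ z - z ^ 2 := by nlinarith
        nlinarith
      linarith
    have hBval : (∫ z in (1/4:ℝ)..(3/4), Real.exp (-(2 * |c|) + (3 / 8) * t₂))
        = (1/2) * Real.exp (-(2 * |c|) + (3 / 8) * t₂) := by
      rw [intervalIntegral.integral_const]
      norm_num
    have hexpval : Real.exp (-(2 * |c|) + (3 / 8) * t₂) = 2 * u + 1 := by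
      have : -(2 * |c|) + (3 / 8) * t₂ = Real.log (2 * u + 1) := by
        rw [ht₂def]; ring
      rw [this, Real.exp_log (by linarith)]
    rw [hBval, hexpval] at hB
    linarith
  -- intermediate value
  have hivt := intermediate_value_uIcc (f := U) (a := t₁) (b := t₂) hUcont.continuousOn
  have humem : u ∈ Set.uIcc (U t₁) (U t₂) :=
    Set.Icc_subset_uIcc ⟨ht₁.le, ht₂big.le⟩
  obtain ⟨s₀, _, hUs₀⟩ := hivt humem
  -- the candidate function
  refine ⟨fun z => c + s₀ * (1 - 2 * z), ?_, ?_, ?_, ?_⟩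
  · apply Continuous.intervalIntegrable; fun_prop
  · apply Continuous.intervalIntegrable; fun_prop
  · have hF : ∀ z : ℝ, (∫ s in (0:ℝ)..z, (c + s₀ * (1 - 2 * s)))
        = c * z + s₀ * (z - z ^ 2) := by
      intro z
      have hanti : ∀ x : ℝ, HasDerivAt (fun w : ℝ => c * w + s₀ * (w - w ^ 2))
          (c + s₀ * (1 - 2 * x)) x := by
        intro x
        have h1 : HasDerivAt (fun w : ℝ => w ^ 2) (2 * x) x := by
          simpa using hasDerivAt_pow 2 x
        have h2 : HasDerivAt (fun w : ℝ => w - w ^ 2) (1 - 2 * x) x :=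
          (hasDerivAt_id x).sub h1
        have h3 := ((hasDerivAt_id x).const_mul c).add (h2.const_mul s₀)
        refine HasDerivAt.congr_deriv h3 ?_
        ring
      have := intervalIntegral.integral_eq_sub_of_hasDerivAt (a := (0:ℝ)) (b := z)
        (f := fun w : ℝ => c * w + s₀ * (w - w ^ 2))
        (f' := fun x => c + s₀ * (1 - 2 * x))
        (fun x _ => hanti x)
        (by apply Continuous.intervalIntegrable; fun_prop)
      rw [this]
      ring
    calc (∫ z in (0:ℝ)..1, Real.exp (2 * ∫ s in (0:ℝ)..z, (c + s₀ * (1 - 2 * s))))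
        = ∫ z in (0:ℝ)..1, Real.exp (2 * (c * z + s₀ * (z - z ^ 2))) := by
          apply intervalIntegral.integral_congr
          intro z _
          simp only [hF z]
      _ = u := hUs₀
  · have hF1 : (∫ s in (0:ℝ)..1, (c + s₀ * (1 - 2 * s))) = c := by
      have hanti : ∀ x : ℝ, HasDerivAt (fun w : ℝ => c * w + s₀ * (w - w ^ 2))
          (c + s₀ * (1 - 2 * x)) x := by
        intro x
        have h1 : HasDerivAt (fun w : ℝ => w ^ 2) (2 * x) x := by
          simpa using hasDerivAt_pow 2 x
        have h2 : HasDerivAt (fun w : ℝ => w - w ^ 2) (1 - 2 * x) x :=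
          (hasDerivAt_id x).sub h1
        have h3 := ((hasDerivAt_id x).const_mul c).add (h2.const_mul s₀)
        refine HasDerivAt.congr_deriv h3 ?_
        ring
      have := intervalIntegral.integral_eq_sub_of_hasDerivAt (a := (0:ℝ)) (b := 1)
        (f := fun w : ℝ => c * w + s₀ * (w - w ^ 2))
        (f' := fun x => c + s₀ * (1 - 2 * x))
        (fun x _ => hanti x)
        (by apply Continuous.intervalIntegrable; fun_prop)
      rw [this]
      ring
    rw [hF1, hc, Real.exp_log hv]

set_option maxHeartbeats 1000000 in
lemma JXlam_exists (a : ℝ) (ha : 0 < a) :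
    ∃! lam : ℝ, lam ∈ Set.Ioo 0 (Real.pi / 2) ∧ lam ^ 2 / Real.cos lam ^ 2 = a / 8 := by
  have hpi := Real.pi_pos
  have hpi3 : (3:ℝ) ≤ Real.pi := by
    have := Real.pi_gt_three
    linarith
  -- choose b close to π/2
  set ε : ℝ := min (Real.pi / 4) ((Real.sqrt a)⁻¹) with hε
  have hsa : 0 < Real.sqrt a := Real.sqrt_pos.mpr ha
  have hε1 : 0 < ε := lt_min (by linarith) (by positivity)
  clear_value ε
  have hε2 : ε ≤ Real.pi / 4 := by rw [hε]; exact min_le_left _ _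
  have hε3 : ε ≤ (Real.sqrt a)⁻¹ := by rw [hε]; exact min_le_right _ _
  set b : ℝ := Real.pi / 2 - ε with hb
  clear_value b
  have hb1 : 0 < b := by rw [hb]; linarith
  have hb2 : b < Real.pi / 2 := by rw [hb]; linarith
  have hcosb : Real.cos b = Real.sin ε := by
    rw [hb, Real.cos_pi_div_two_sub]
  have hcosb_pos : 0 < Real.cos b := by
    rw [hcosb]
    apply Real.sin_pos_of_pos_of_lt_pi hε1
    linarith
  have hcosb_le : Real.cos b ≤ ε := by
    rw [hcosb]
    exact Real.sin_le hε1.le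
  have hbge : Real.pi / 4 ≤ b := by rw [hb]; linarith
  have hbig : a / 8 ≤ b ^ 2 / Real.cos b ^ 2 := by
    rw [div_le_div_iff₀ (by norm_num) (by positivity)]
    have h1 : Real.cos b ^ 2 ≤ ε ^ 2 := by nlinarith [hcosb_pos]
    have h2 : a * ε ^ 2 ≤ 1 := by
      have h5 : ε ^ 2 ≤ ((Real.sqrt a)⁻¹) ^ 2 := by nlinarith
      have h3 : ((Real.sqrt a)⁻¹) ^ 2 = a⁻¹ := by
        rw [← Real.sqrt_inv]
        exact Real.sq_sqrt (by positivity)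
      rw [h3] at h5
      calc a * ε ^ 2 ≤ a * a⁻¹ := mul_le_mul_of_nonneg_left h5 ha.le
        _ = 1 := mul_inv_cancel₀ ha.ne'
    have h4 : (1:ℝ) ≤ 8 * b ^ 2 := by nlinarith [hbge, hpi3, sq_nonneg (b - 3/4)]
    nlinarith
  -- continuity on [0, b]
  have hcos_pos : ∀ x ∈ Icc (0:ℝ) b, 0 < Real.cos x := by
    intro x hx
    apply Real.cos_pos_of_mem_Ioo
    constructor
    · linarith [hx.1]
    · linarith [hx.2, hb2]
  have hcont : ContinuousOn (fun x : ℝ => x ^ 2 / Real.cos x ^ 2) (Icc 0 b) := by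
    apply ContinuousOn.div (by fun_prop) (by fun_prop)
    intro x hx
    exact pow_ne_zero _ (hcos_pos x hx).ne'
  have hivt := intermediate_value_Icc hb1.le hcont
  have hmem : a / 8 ∈ Icc ((fun x : ℝ => x ^ 2 / Real.cos x ^ 2) 0)
      ((fun x : ℝ => x ^ 2 / Real.cos x ^ 2) b) := by
    constructor
    · simp; positivity
    · simpa using hbig
  obtain ⟨lam, hlam, hlameq⟩ := hivt hmem
  have hlameq : lam ^ 2 / Real.cos lam ^ 2 = a / 8 := hlameq
  have hlampos : 0 < lam := by
    rcases lt_or_eq_of_le hlam.1 with h | h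
    · exact h
    · exfalso
      rw [← h] at hlameq
      simp at hlameq
      linarith
  refine ⟨lam, ⟨⟨hlampos, lt_of_le_of_lt hlam.2 hb2⟩, hlameq⟩, ?_⟩
  -- uniqueness
  rintro y ⟨⟨hy1, hy2⟩, hyeq⟩
  by_contra hne
  have hmono : ∀ p q : ℝ, p ∈ Set.Ioo 0 (Real.pi/2) → q ∈ Set.Ioo 0 (Real.pi/2) → p < q →
      p ^ 2 / Real.cos p ^ 2 < q ^ 2 / Real.cos q ^ 2 := by
    rintro p q ⟨hp1, hp2⟩ ⟨hq1, hq2⟩ hpq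
    have hcp : 0 < Real.cos p := Real.cos_pos_of_mem_Ioo ⟨by linarith, hp2⟩
    have hcq : 0 < Real.cos q := Real.cos_pos_of_mem_Ioo ⟨by linarith, hq2⟩
    have hclt : Real.cos q < Real.cos p := by
      apply Real.cos_lt_cos_of_nonneg_of_le_pi hp1.le (by linarith) hpq
    rw [div_lt_div_iff₀ (by positivity) (by positivity)]
    have h1 : p ^ 2 < q ^ 2 := by nlinarith [mul_pos (sub_pos.mpr hpq) (show 0 < q + p by linarith)]
    have h2 : Real.cos q ^ 2 < Real.cos p ^ 2 := by nlinarith [mul_pos (sub_pos.mpr hclt) (show 0 < Real.cos p + Real.cos q by linarith)]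
    calc p ^ 2 * Real.cos q ^ 2 < q ^ 2 * Real.cos q ^ 2 :=
          mul_lt_mul_of_pos_right h1 (by positivity)
      _ < q ^ 2 * Real.cos p ^ 2 := mul_lt_mul_of_pos_left h2 (by positivity)
  have hlam' : lam ∈ Set.Ioo 0 (Real.pi/2) := ⟨hlampos, lt_of_le_of_lt hlam.2 hb2⟩
  rcases lt_trichotomy y lam with h | h | h
  · have := hmono y lam ⟨hy1, hy2⟩ hlam' h
    rw [hyeq, hlameq] at this
    exact lt_irrefl _ this
  · exact hne h
  · have := hmono lam y hlam' ⟨hy1, hy2⟩ h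
    rw [hyeq, hlameq] at this
    exact lt_irrefl _ this

lemma ratefun_set_bddBelow (u v : ℝ) : BddBelow {r : ℝ | ∃ g : ℝ → ℝ,
    IntervalIntegrable g volume 0 1 ∧
    IntervalIntegrable (fun z => (g z) ^ 2) volume 0 1 ∧
    (∫ z in (0:ℝ)..(1:ℝ), Real.exp (2 * ∫ t in (0:ℝ)..z, g t)) = u ∧
    Real.exp (∫ t in (0:ℝ)..(1:ℝ), g t) = v ∧
    r = 4 * ∫ z in (0:ℝ)..(1:ℝ), (g z) ^ 2} := by
  refine ⟨0, ?_⟩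
  rintro r ⟨g, _, _, _, _, hr⟩
  rw [hr]
  have : 0 ≤ ∫ z in (0:ℝ)..1, (g z) ^ 2 :=
    intervalIntegral.integral_nonneg zero_le_one (fun z _ => sq_nonneg _)
  linarith

theorem ratefun_JX_atm (a : ℝ) (ha : 0 < a)
    (JX : ℝ → ℝ)
    (hJX : ∀ y : ℝ, JX y =
      sInf {r : ℝ | ∃ u v : ℝ, 0 < u ∧ 0 < v ∧
        r = (1 / 2) * ratefun u v + (a / u) * (y + u / 2) ^ 2}) :
    JX 0 = sInf {r : ℝ | ∃ u v : ℝ, 0 < u ∧ 0 < v ∧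
        r = (1 / 2) * ratefun u v + a * u / 4} ∧
    (∃! lam : ℝ, lam ∈ Set.Ioo 0 (Real.pi / 2) ∧ lam ^ 2 / Real.cos lam ^ 2 = a / 8) ∧
    (∀ lam : ℝ, lam ∈ Set.Ioo 0 (Real.pi / 2) → lam ^ 2 / Real.cos lam ^ 2 = a / 8 →
      JX 0 = 2 * lam * (2 * Real.tan lam - lam)) := by
  have hset : {r : ℝ | ∃ u v : ℝ, 0 < u ∧ 0 < v ∧
        r = (1 / 2) * ratefun u v + (a / u) * ((0:ℝ) + u / 2) ^ 2}
      = {r : ℝ | ∃ u v : ℝ, 0 < u ∧ 0 < v ∧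
        r = (1 / 2) * ratefun u v + a * u / 4} := by
    ext r
    simp only [Set.mem_setOf_eq]
    constructor
    · rintro ⟨u, v, hu, hv, hr⟩
      refine ⟨u, v, hu, hv, ?_⟩
      rw [hr]
      field_simp
      ring
    · rintro ⟨u, v, hu, hv, hr⟩
      refine ⟨u, v, hu, hv, ?_⟩
      rw [hr]
      field_simp
      ring
  have hJX0 : JX 0 = sInf {r : ℝ | ∃ u v : ℝ, 0 < u ∧ 0 < v ∧
      r = (1 / 2) * ratefun u v + a * u / 4} := by
    rw [hJX 0, hset]
  -- the main computation
  have main : ∀ lam : ℝ, lam ∈ Set.Ioo 0 (Real.pi / 2) →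
      lam ^ 2 / Real.cos lam ^ 2 = a / 8 →
      sInf {r : ℝ | ∃ u v : ℝ, 0 < u ∧ 0 < v ∧
        r = (1 / 2) * ratefun u v + a * u / 4} = 2 * lam * (2 * Real.tan lam - lam) := by
    rintro lam ⟨hl1, hl2⟩ heq
    have htan : 0 < Real.tan lam := Real.tan_pos_of_pos_of_lt_pi_div_two hl1 hl2
    have huIcc : Set.uIcc (0:ℝ) 1 = Icc (0:ℝ) 1 := Set.uIcc_of_le zero_le_one
    set Vr : ℝ := 4 * lam * Real.tan lam - 2 * lam ^ 2 with hVr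
    have hVform : 2 * lam * (2 * Real.tan lam - lam) = Vr := by rw [hVr]; ring
    rw [hVform]
    -- lower bound for elements of the rate set
    have hlow : ∀ u v : ℝ, 0 < u → 0 < v → 2 * Vr - a * u / 2 ≤ ratefun u v := by
      intro u v hu hv
      unfold ratefun
      apply le_csInf
      · obtain ⟨g, h1, h2, h3, h4⟩ := JX_exists u v hu hv
        exact ⟨4 * ∫ z in (0:ℝ)..1, (g z) ^ 2, g, h1, h2, h3, h4, rfl⟩
      · rintro x ⟨g, hg1, hg2, hg3, _, hx⟩
        have := JX_lower ha hl1 hl2 heq g hg1 hg2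
        rw [hg3] at this
        rw [hx, hVr]
        linarith
    -- V is a lower bound of S
    have hlb : ∀ r ∈ {r : ℝ | ∃ u v : ℝ, 0 < u ∧ 0 < v ∧
        r = (1 / 2) * ratefun u v + a * u / 4}, Vr ≤ r := by
      rintro r ⟨u, v, hu, hv, hr⟩
      have := hlow u v hu hv
      rw [hr]
      linarith
    -- the optimizer
    set u0 : ℝ := ∫ z in (0:ℝ)..1, Real.exp (2 * ∫ t in (0:ℝ)..z, JXphi lam t) with hu0
    set v0 : ℝ := Real.exp (∫ t in (0:ℝ)..1, JXphi lam t) with hv0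
    have hu0val : u0 = 8 / a * (lam * Real.tan lam) := by
      rw [hu0]
      have hcongr : ∀ z ∈ Set.uIcc (0:ℝ) 1,
          Real.exp (2 * ∫ t in (0:ℝ)..z, JXphi lam t) = 8 / a * JXphid lam z := by
        intro z hz
        rw [huIcc] at hz
        rw [JXprim_phi hl1 hl2 hz, JXexp_fstar8 ha hl1 hl2 heq hz]
      rw [intervalIntegral.integral_congr hcongr, intervalIntegral.integral_const_mul,
        JXint_phid hl1 hl2]
    have hu0pos : 0 < u0 := by
      rw [hu0val]
      positivity
    have hv0pos : 0 < v0 := Real.exp_pos _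
    have hphiII : IntervalIntegrable (JXphi lam) volume 0 1 := by
      apply ContinuousOn.intervalIntegrable
      rw [huIcc]
      exact JXphi_contOn hl1 hl2
    have hphisqII : IntervalIntegrable (fun z => (JXphi lam z) ^ 2) volume 0 1 := by
      apply ContinuousOn.intervalIntegrable
      rw [huIcc]
      exact (JXphi_contOn hl1 hl2).pow 2
    -- value of ratefun at the optimizer
    have hrate : ratefun u0 v0 = 4 * (lam * Real.tan lam - lam ^ 2) := by
      apply le_antisymm
      · have hmem : 4 * (lam * Real.tan lam - lam ^ 2) ∈ {r : ℝ | ∃ g : ℝ → ℝ,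
            IntervalIntegrable g volume 0 1 ∧
            IntervalIntegrable (fun z => (g z) ^ 2) volume 0 1 ∧
            (∫ z in (0:ℝ)..(1:ℝ), Real.exp (2 * ∫ t in (0:ℝ)..z, g t)) = u0 ∧
            Real.exp (∫ t in (0:ℝ)..(1:ℝ), g t) = v0 ∧
            r = 4 * ∫ z in (0:ℝ)..(1:ℝ), (g z) ^ 2} := by
          refine ⟨JXphi lam, hphiII, hphisqII, rfl, rfl, ?_⟩
          rw [JXint_phisq hl1 hl2]
        exact csInf_le (ratefun_set_bddBelow u0 v0) hmem
      · apply le_csInf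
        · refine ⟨4 * ∫ z in (0:ℝ)..1, (JXphi lam z) ^ 2, JXphi lam, hphiII, hphisqII,
            rfl, rfl, rfl⟩
        · rintro x ⟨g, hg1, hg2, hg3, _, hx⟩
          have hl := JX_lower ha hl1 hl2 heq g hg1 hg2
          rw [hg3, hu0val] at hl
          have h8 : a / 4 * (8 / a * (lam * Real.tan lam)) = 2 * (lam * Real.tan lam) := by
            field_simp
            ring
          rw [h8] at hl
          rw [hx]
          linarith
    -- V is attained
    have hmemS : Vr ∈ {r : ℝ | ∃ u v : ℝ, 0 < u ∧ 0 < v ∧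
        r = (1 / 2) * ratefun u v + a * u / 4} := by
      refine ⟨u0, v0, hu0pos, hv0pos, ?_⟩
      rw [hrate, hu0val, hVr]
      field_simp
      ring
    exact (IsLeast.csInf_eq ⟨hmemS, hlb⟩)
  refine ⟨hJX0, JXlam_exists a ha, ?_⟩
  intro lam hmem heq
  rw [hJX0, main lam hmem heq]
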